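/- arXiv:1205.3717 — 5 statements merged into one kernel-verified Lean document; each statement's English description precedes it below -/
import Mathlib

section
/- If G is a countable graph with the extension property and v is a vertex of G, then the induced subgraph on the neighbourhood of v satisfies the extension property. -/
def ExtProp {V : Type*} (G : SimpleGraph V) : Prop :=
  ∀ A B : Finset V, Disjoint A B →
    ∃ v, v ∉ A ∧ v ∉ B ∧ (∀ a ∈ A, G.Adj v a) ∧ ∀ b ∈ B, ¬ G.Adj v b

def switch {V : Type*} (G : SimpleGraph V) (X : Set V) : SimpleGraph V where
  Adj u v := u ≠ v ∧ (G.Adj u v ↔ ((u ∈ X) ↔ (v ∈ X)))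
  symm := by
    constructor
    intro u v h
    refine ⟨h.1.symm, ?_⟩
    rw [G.adj_comm]
    tauto
  loopless := by constructor; intro v h; exact h.1 rfl

theorem extProp_neighborSet {V : Type*} [Countable V]
    (G : SimpleGraph V) (h : ExtProp G) (v : V) :
    ExtProp (G.induce (G.neighborSet v)) := by
  intro A B hAB
  classical
  set A' : Finset V := insert v (A.image Subtype.val) with hA'
  set B' : Finset V := B.image Subtype.val with hB'
  have hdisj : Disjoint A' B' := by
    rw [hA', Finset.insert_eq, Finset.disjoint_union_left]
    constructor
    · rw [Finset.disjoint_singleton_left, hB', Finset.mem_image]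
      rintro ⟨b, _, hb⟩
      exact G.irrefl (hb ▸ b.2)
    · rw [Finset.disjoint_left]
      rintro x hx hx'
      rw [Finset.mem_image] at hx hx'
      obtain ⟨a, ha, rfl⟩ := hx
      obtain ⟨b, hb, hba⟩ := hx'
      have : b = a := Subtype.ext hba
      exact Finset.disjoint_left.mp hAB ha (this ▸ hb)
  obtain ⟨w, hwA, hwB, hadjA, hadjB⟩ := h A' B' hdisj
  have hwv : G.Adj w v := hadjA v (Finset.mem_insert_self _ _)
  refine ⟨⟨w, G.adj_symm hwv⟩, ?_, ?_, ?_, ?_⟩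
  · intro hmem
    exact hwA (Finset.mem_insert_of_mem (Finset.mem_image_of_mem _ hmem))
  · intro hmem
    exact hwB (Finset.mem_image_of_mem _ hmem)
  · intro a ha
    exact hadjA a (Finset.mem_insert_of_mem (Finset.mem_image_of_mem _ ha))
  · intro b hb hadj
    exact hadjB b (Finset.mem_image_of_mem _ hb) hadj
end

section
/- Let R be a countable graph with the extension property, and let X be an arbitrary set of vertices. Then there is a finite set S of vertices such that the graph σ_X(R) restricted to the complement of S satisfies the extension property (i.e., induces a copy of the Rado graph). -/
lemma switch_aux {V : Type*} [DecidableEq V] (R : SimpleGraph V) (X : Set V)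
    (C D : Finset V) (hCD : Disjoint C D) (ε : Prop)
    (hwit : ∀ C' D' : Finset V, Disjoint C' D' → C ⊆ C' → D ⊆ D' →
      ∃ v, v ∉ C' ∧ v ∉ D' ∧ ((v ∈ X) ↔ ε) ∧ (∀ c ∈ C', R.Adj v c) ∧
        (∀ d ∈ D', ¬ R.Adj v d)) :
    ExtProp ((switch R X).induce ((↑(C ∪ D) : Set V)ᶜ)) := by
  classical
  intro A B hAB
  set A₀ : Finset V := A.image Subtype.val with hA₀
  set B₀ : Finset V := B.image Subtype.val with hB₀
  have hA₀mem : ∀ a ∈ A₀, a ∉ C ∧ a ∉ D := by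
    intro a ha
    simp only [hA₀, Finset.mem_image] at ha
    obtain ⟨⟨a, hac⟩, _, rfl⟩ := ha
    simp only [Set.mem_compl_iff, Finset.coe_union, Set.mem_union, Finset.mem_coe,
      not_or] at hac
    exact hac
  have hB₀mem : ∀ b ∈ B₀, b ∉ C ∧ b ∉ D := by
    intro b hb
    simp only [hB₀, Finset.mem_image] at hb
    obtain ⟨⟨b, hbc⟩, _, rfl⟩ := hb
    simp only [Set.mem_compl_iff, Finset.coe_union, Set.mem_union, Finset.mem_coe,
      not_or] at hbc
    exact hbc
  have hA₀B₀ : ∀ x, x ∈ A₀ → x ∈ B₀ → False := by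
    intro x hxa hxb
    simp only [hA₀, hB₀, Finset.mem_image] at hxa hxb
    obtain ⟨a, ha, rfl⟩ := hxa
    obtain ⟨b, hb, hba⟩ := hxb
    have : b = a := Subtype.ext hba
    subst this
    exact Finset.disjoint_left.mp hAB ha hb
  set P : V → Prop := fun a => (a ∈ X) ↔ ε with hP
  set C' : Finset V := A₀.filter P ∪ B₀.filter (fun a => ¬ P a) ∪ C with hC'
  set D' : Finset V := A₀.filter (fun a => ¬ P a) ∪ B₀.filter P ∪ D with hD'
  have hdisj : Disjoint C' D' := by
    rw [Finset.disjoint_left]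
    intro x hx hx'
    simp only [hC', hD', Finset.mem_union, Finset.mem_filter] at hx hx'
    rcases hx with (⟨hx, hPx⟩ | ⟨hx, hPx⟩) | hx <;>
      rcases hx' with (⟨hx', hPx'⟩ | ⟨hx', hPx'⟩) | hx'
    · exact hPx' hPx
    · exact hA₀B₀ x hx hx'
    · exact (hA₀mem x hx).2 hx'
    · exact hA₀B₀ x hx' hx
    · exact hPx hPx'
    · exact (hB₀mem x hx).2 hx'
    · exact (hA₀mem x hx').1 hx
    · exact (hB₀mem x hx').1 hx
    · exact Finset.disjoint_left.mp hCD hx hx'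
  obtain ⟨v, hvC', hvD', hvX, hadj, hnadj⟩ := hwit C' D' hdisj
    (by intro x hx; simp only [hC', Finset.mem_union]; tauto)
    (by intro x hx; simp only [hD', Finset.mem_union]; tauto)
  have hvC : v ∉ C := fun h => hvC' (by simp only [hC', Finset.mem_union]; tauto)
  have hvD : v ∉ D := fun h => hvD' (by simp only [hD', Finset.mem_union]; tauto)
  have hvc : v ∈ ((↑(C ∪ D) : Set V)ᶜ) := by
    simp only [Set.mem_compl_iff, Finset.coe_union, Set.mem_union, Finset.mem_coe, not_or]
    exact ⟨hvC, hvD⟩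
  have hvA₀ : v ∉ A₀ := by
    intro h
    by_cases hp : P v
    · exact hvC' (by simp only [hC', Finset.mem_union, Finset.mem_filter]; tauto)
    · exact hvD' (by simp only [hD', Finset.mem_union, Finset.mem_filter]; tauto)
  have hvB₀ : v ∉ B₀ := by
    intro h
    by_cases hp : P v
    · exact hvD' (by simp only [hD', Finset.mem_union, Finset.mem_filter]; tauto)
    · exact hvC' (by simp only [hC', Finset.mem_union, Finset.mem_filter]; tauto)
  refine ⟨⟨v, hvc⟩, ?_, ?_, ?_, ?_⟩
  · intro h
    exact hvA₀ (Finset.mem_image.mpr ⟨⟨v, hvc⟩, h, rfl⟩)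
  · intro h
    exact hvB₀ (Finset.mem_image.mpr ⟨⟨v, hvc⟩, h, rfl⟩)
  · rintro ⟨a, hac⟩ ha
    have haA₀ : a ∈ A₀ := Finset.mem_image.mpr ⟨⟨a, hac⟩, ha, rfl⟩
    have hne : v ≠ a := fun h => hvA₀ (h ▸ haA₀)
    refine ⟨hne, ?_⟩
    show R.Adj v a ↔ ((v ∈ X) ↔ (a ∈ X))
    by_cases hp : P a
    · have hadj' : R.Adj v a := hadj a
        (Finset.mem_union_left _ (Finset.mem_union_left _ (Finset.mem_filter.mpr ⟨haA₀, hp⟩)))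
      exact iff_of_true hadj' (hvX.trans hp.symm)
    · have hnadj' : ¬ R.Adj v a := hnadj a
        (Finset.mem_union_left _ (Finset.mem_union_left _ (Finset.mem_filter.mpr ⟨haA₀, hp⟩)))
      exact iff_of_false hnadj' (fun h => hp (h.symm.trans hvX))
  · rintro ⟨b, hbc⟩ hb hadjb
    have hbB₀ : b ∈ B₀ := Finset.mem_image.mpr ⟨⟨b, hbc⟩, hb, rfl⟩
    obtain ⟨hne, hiff⟩ := hadjb
    have hiff' : R.Adj v b ↔ ((v ∈ X) ↔ (b ∈ X)) := hiff
    by_cases hp : P b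
    · have hnadj' : ¬ R.Adj v b := hnadj b
        (Finset.mem_union_left _ (Finset.mem_union_right _ (Finset.mem_filter.mpr ⟨hbB₀, hp⟩)))
      exact hnadj' (hiff'.mpr (hvX.trans hp.symm))
    · have hadj' : R.Adj v b := hadj b
        (Finset.mem_union_left _ (Finset.mem_union_right _ (Finset.mem_filter.mpr ⟨hbB₀, hp⟩)))
      exact hp ((hiff'.mp hadj').symm.trans hvX)

theorem switch_cofinite_copy {V : Type*} [Countable V]
    (R : SimpleGraph V) (hR : ExtProp R) (X : Set V) :
    ∃ S : Finset V, ExtProp ((switch R X).induce ((↑S : Set V)ᶜ)) := by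
  classical
  by_cases hP : ∀ C D : Finset V, Disjoint C D →
      ∃ v, v ∉ C ∧ v ∉ D ∧ v ∈ X ∧ (∀ c ∈ C, R.Adj v c) ∧ (∀ d ∈ D, ¬ R.Adj v d)
  · refine ⟨∅ ∪ ∅, switch_aux R X ∅ ∅ (by simp) True ?_⟩
    intro C' D' hdisj _ _
    obtain ⟨v, h1, h2, h3, h4, h5⟩ := hP C' D' hdisj
    exact ⟨v, h1, h2, by simp [h3], h4, h5⟩
  · push_neg at hP
    obtain ⟨C, D, hCD, hno⟩ := hP
    refine ⟨C ∪ D, switch_aux R X C D hCD False ?_⟩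
    intro C' D' hdisj hC hD
    obtain ⟨v, h1, h2, h4, h5⟩ := hR C' D' hdisj
    refine ⟨v, h1, h2, ?_, h4, h5⟩
    simp only [iff_false]
    intro hvX
    obtain ⟨d, hd, hda⟩ := hno v (fun h => h1 (hC h)) (fun h => h2 (hD h)) hvX
      (fun c hc => h4 c (hC hc))
    exact h5 d (hD hd) hda
end

section
/- Let R be the Rado graph and g a permutation of its vertices changing only finitely many adjacencies at each vertex (g ∈ Aut₂(R)). Then for every vertex v, the image g(R(v)) of the neighbourhood of v belongs to the neighbourhood filter F_R, i.e., g(R(v)) contains a finite intersection of vertex neighbourhoods. -/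
theorem aut2_preserves_nbhd_filter {V : Type*} [Countable V]
    (R : SimpleGraph V) (hR : ExtProp R) (g : Equiv.Perm V)
    (hg : ∀ v : V, {w : V | ¬ (R.Adj v w ↔ R.Adj (g v) (g w))}.Finite) (v : V) :
    ∃ T : Finset V, (⋂ t ∈ T, R.neighborSet t) ⊆ ⇑g '' R.neighborSet v := by
  classical
  have hS : {w : V | ¬ (R.Adj v w ↔ R.Adj (g v) (g w))}.Finite := hg v
  refine ⟨insert (g v) (hS.toFinset.image g), ?_⟩
  intro u hu
  simp only [Set.mem_iInter, Finset.mem_insert, Finset.mem_image,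
    SimpleGraph.mem_neighborSet] at hu
  have h1 : R.Adj (g v) u := hu (g v) (Or.inl rfl)
  set w := g.symm u with hwdef
  have hw : g w = u := g.apply_symm_apply u
  have hwS : w ∉ {w : V | ¬ (R.Adj v w ↔ R.Adj (g v) (g w))} := by
    intro hmem
    have := hu (g w) (Or.inr ⟨w, by simpa using hmem, rfl⟩)
    rw [hw] at this
    exact R.irrefl this
  have hiff : R.Adj v w ↔ R.Adj (g v) (g w) := not_not.mp hwS
  exact ⟨w, hiff.mpr (by rw [hw]; exact h1), hw⟩
end

section
/- Every nonidentity finitary permutation g of the vertices of the Rado graph R changes infinitely many adjacencies at some vertex; specifically, if g moves a vertex v, then {w : adjacency of v and w is changed by g} is infinite. Consequently FSym(R) ∩ Aut₂(R) = 1. -/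
theorem finitary_changes_infinitely {V : Type*} [Countable V]
    (R : SimpleGraph V) (hR : ExtProp R) (g : Equiv.Perm V)
    (hfin : {x : V | g x ≠ x}.Finite) :
    (∀ v : V, g v ≠ v → {w : V | ¬ (R.Adj v w ↔ R.Adj (g v) (g w))}.Infinite) ∧
    ((∀ v : V, {w : V | ¬ (R.Adj v w ↔ R.Adj (g v) (g w))}.Finite) → g = 1) := by
  have main : ∀ v : V, g v ≠ v →
      {w : V | ¬ (R.Adj v w ↔ R.Adj (g v) (g w))}.Infinite := by
    intro v hv hbad
    classical
    set B : Finset V :=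
      (insert (g v) (hfin.toFinset ∪ hbad.toFinset)).erase v with hB
    have hdisj : Disjoint ({v} : Finset V) B := by
      simp [hB]
    obtain ⟨u, huA, huB, hadjA, hnadjB⟩ := hR {v} B hdisj
    have huv : u ≠ v := by simpa using huA
    have hgvB : g v ∈ B := Finset.mem_erase.mpr ⟨hv, Finset.mem_insert_self _ _⟩
    have hnadj : ¬ R.Adj u (g v) := hnadjB _ hgvB
    have hfix : g u = u := by
      by_contra h
      exact huB (Finset.mem_erase.mpr ⟨huv, Finset.mem_insert_of_mem
        (Finset.mem_union_left _ (by simpa using h))⟩)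
    have hnotbad : u ∉ {w : V | ¬ (R.Adj v w ↔ R.Adj (g v) (g w))} := by
      intro h
      exact huB (Finset.mem_erase.mpr ⟨huv, Finset.mem_insert_of_mem
        (Finset.mem_union_right _ (by simpa using h))⟩)
    have hiff : R.Adj v u ↔ R.Adj (g v) (g u) := by
      by_contra h; exact hnotbad h
    rw [hfix] at hiff
    exact hnadj (R.adj_symm (hiff.mp (R.adj_symm (hadjA v (Finset.mem_singleton_self v)))))
  refine ⟨main, fun h => ?_⟩
  ext w
  by_contra hw
  exact main w hw (h w)
end

section
/- Let R be the Rado graph and suppose g is a permutation of the vertices that is an isomorphism from R to σ_X(R) for some vertex set X with both X and its complement Y nonempty. If there exist vertices x, y with g x ∈ X and g y ∈ Y, then R(g x) ∩ g(R(x)) ⊆ X and R(g y) ∩ g(R(y)) ⊆ Y, hence R(g x) ∩ g(R(x)) ∩ R(g y) ∩ g(R(y)) = ∅. -/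
theorem switching_iso_disjoint_nbhds {V : Type*} [Countable V]
    (R : SimpleGraph V) (hR : ExtProp R) (g : Equiv.Perm V) (X : Set V)
    (hX : X.Nonempty) (hY : Xᶜ.Nonempty)
    (hiso : ∀ u v : V, R.Adj u v ↔ (switch R X).Adj (g u) (g v))
    (x y : V) (hx : g x ∈ X) (hy : g y ∈ Xᶜ) :
    R.neighborSet (g x) ∩ ⇑g '' R.neighborSet x ⊆ X ∧
    R.neighborSet (g y) ∩ ⇑g '' R.neighborSet y ⊆ Xᶜ ∧
    R.neighborSet (g x) ∩ ⇑g '' R.neighborSet x ∩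
      (R.neighborSet (g y) ∩ ⇑g '' R.neighborSet y) = ∅ := by
  have hsub : ∀ (v : V), (g v ∈ X → R.neighborSet (g v) ∩ ⇑g '' R.neighborSet v ⊆ X)
      ∧ (g v ∈ Xᶜ → R.neighborSet (g v) ∩ ⇑g '' R.neighborSet v ⊆ Xᶜ) := by
    intro v
    have key : ∀ z ∈ R.neighborSet (g v) ∩ ⇑g '' R.neighborSet v, (g v ∈ X ↔ z ∈ X) := by
      rintro z ⟨hz1, w, hw, rfl⟩
      have := (hiso v w).mp hw
      exact this.2.mp hz1
    constructor
    · intro hv z hz; exact (key z hz).mp hv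
    · intro hv z hz hzX; exact hv ((key z hz).mpr hzX)
  refine ⟨(hsub x).1 hx, (hsub y).2 hy, ?_⟩
  ext z
  simp only [Set.mem_inter_iff, Set.mem_empty_iff_false, iff_false]
  rintro ⟨h1, h2⟩
  exact (hsub y).2 hy h2 ((hsub x).1 hx h1)
end
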